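/- arXiv:1803.07733 — 4 statements merged into one kernel-verified Lean document; each statement's English description precedes it below -/
import Mathlib

section
/- The polynomial p(x,y,z) = x^4 - x^3(y+z) + x^2yz + x(-y^3 + y^2z + yz^2 - z^3) + y^4 - y^3z - yz^3 + z^4 is nonnegative for all real x, y, z, and it equals zero if and only if x = y = z, or two of the variables are equal and the third is zero. -/
noncomputable def p3 (x y z : ℝ) : ℝ :=
  x^4 - x^3*(y+z) + x^2*y*z + x*(-y^3 + y^2*z + y*z^2 - z^3) + y^4 - y^3*z - y*z^3 + z^4

theorem stmt_4 (x y z : ℝ) :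
    0 ≤ p3 x y z ∧
    (p3 x y z = 0 ↔
      (x = y ∧ y = z) ∨ (x = y ∧ z = 0) ∨ (x = z ∧ y = 0) ∨ (y = z ∧ x = 0)) := by
  have key : p3 x y z =
      ((x-z)*(x+z-y) - (y-z)*(y+z-x)/2)^2 + 3/4*((y-z)*(y+z-x))^2 := by
    unfold p3; ring
  refine ⟨by rw [key]; positivity, ?_, ?_⟩
  · intro h
    rw [key] at h
    have hw : (y-z)*(y+z-x) = 0 := by
      nlinarith [sq_nonneg ((x-z)*(x+z-y) - (y-z)*(y+z-x)/2), sq_nonneg ((y-z)*(y+z-x))]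
    have hv : (x-z)*(x+z-y) = 0 := by
      nlinarith [sq_nonneg ((x-z)*(x+z-y) - (y-z)*(y+z-x)/2), sq_nonneg ((y-z)*(y+z-x))]
    rcases mul_eq_zero.mp hv with h1 | h1 <;> rcases mul_eq_zero.mp hw with h2 | h2
    · exact Or.inl ⟨by linarith, by linarith⟩
    · exact Or.inr (Or.inr (Or.inl ⟨by linarith, by linarith⟩))
    · exact Or.inr (Or.inr (Or.inr ⟨by linarith, by linarith⟩))
    · exact Or.inr (Or.inl ⟨by linarith, by linarith⟩)
  · rintro (⟨h1, h2⟩ | ⟨h1, h2⟩ | ⟨h1, h2⟩ | ⟨h1, h2⟩) <;> subst h1 <;> subst h2 <;>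
      unfold p3 <;> ring
end

section
/- For real numbers a, b, c with 0 < a and 0 < b ≤ c, the quantity p(-a,b,c) + q(b,-a,c) is negative unless it is zero, and equals -2[(c-b)(c^3 + c^2 b + c b^2 + 3b^3 + a(c^2 + cb + 2b^2)) + a^3(a+c)]; in particular p(-a,b,c) + q(b,-a,c) < 0. -/
noncomputable def q3 (x y z : ℝ) : ℝ :=
  5*x^4 - 3*x^3*(y+z) + x^2*y*z + x*(y^3 - y^2*z - y*z^2 + z^3) - 3*y^4 + 3*y^3*z + 3*y*z^3 - 3*z^4

theorem stmt_6 (a b c : ℝ) (ha : 0 < a) (hb : 0 < b) (hbc : b ≤ c) :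
    p3 (-a) b c + q3 b (-a) c =
      -(2*((c-b)*(c^3 + c^2*b + c*b^2 + 3*b^3 + a*(c^2 + c*b + 2*b^2)) + a^3*(a+c))) ∧
    p3 (-a) b c + q3 b (-a) c < 0 := by
  constructor
  · simp only [p3, q3]; ring
  · have h : p3 (-a) b c + q3 b (-a) c =
      -(2*((c-b)*(c^3 + c^2*b + c*b^2 + 3*b^3 + a*(c^2 + c*b + 2*b^2)) + a^3*(a+c))) := by
      simp only [p3, q3]; ring
    rw [h]
    have hc : 0 < c := hb.trans_le hbc
    have h1 : 0 ≤ c - b := sub_nonneg.2 hbc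
    have h2 : 0 < c^3 + c^2*b + c*b^2 + 3*b^3 + a*(c^2 + c*b + 2*b^2) := by positivity
    have h3 : 0 < a^3*(a+c) := by positivity
    nlinarith [mul_nonneg h1 h2.le]
end

section
/- For real numbers a, b, c with 0 < a and 0 < b ≤ c, the quantity 3·q(-a,b,c) + 5·q(b,-a,c) equals -2[(c-b)(12c^3 + 5c^2 b + 5cb^2 + 8b^3 + a(9c^2 + 5cb + 6b^2)) + a^2(bc + a(3c - 2b))] and is strictly negative. -/
theorem stmt_7 (a b c : ℝ) (ha : 0 < a) (hb : 0 < b) (hbc : b ≤ c) :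
    3 * q3 (-a) b c + 5 * q3 b (-a) c =
      -(2*((c-b)*(12*c^3 + 5*c^2*b + 5*c*b^2 + 8*b^3 + a*(9*c^2 + 5*c*b + 6*b^2))
          + a^2*(b*c + a*(3*c - 2*b)))) ∧
    3 * q3 (-a) b c + 5 * q3 b (-a) c < 0 := by
  have heq : 3 * q3 (-a) b c + 5 * q3 b (-a) c =
      -(2*((c-b)*(12*c^3 + 5*c^2*b + 5*c*b^2 + 8*b^3 + a*(9*c^2 + 5*c*b + 6*b^2))
          + a^2*(b*c + a*(3*c - 2*b)))) := by
    unfold q3; ring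
  refine ⟨heq, ?_⟩
  rw [heq]
  have hcb : 0 ≤ c - b := by linarith
  have hc : 0 < c := lt_of_lt_of_le hb hbc
  have h1 : 0 ≤ (c-b)*(12*c^3 + 5*c^2*b + 5*c*b^2 + 8*b^3 + a*(9*c^2 + 5*c*b + 6*b^2)) := by
    positivity
  have h3 : 0 < 3*c - 2*b := by linarith
  have h2 : 0 < a^2*(b*c + a*(3*c - 2*b)) := by positivity
  linarith
end

section
/- Let γ > 0 and let f₁(0), f₂(0) > 0 satisfy f₁(0)·f₂(0) = γ and f₁(0) < f₂(0). Set μ = (1/2)·ln((f₁(0)+f₂(0))/(f₂(0)-f₁(0))). Then f₁(t) = sqrt(γ·tanh(t/(3γ) + μ)) solves df₁/dt = (1/6)(f₁^{-1} - γ^{-2}·f₁³) on [0,∞) with initial value f₁(0), and f₂(t) = γ/f₁(t) = sqrt(γ·coth(t/(3γ) + μ)). -/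
theorem stmt_14 (γ f10 f20 : ℝ) (hγ : 0 < γ) (hf10 : 0 < f10) (hf20 : 0 < f20)
    (hprod : f10 * f20 = γ) (hlt : f10 < f20)
    (μ : ℝ) (hμ : μ = (1/2) * Real.log ((f10 + f20) / (f20 - f10)))
    (f₁ f₂ : ℝ → ℝ)
    (hf1 : ∀ t, f₁ t = Real.sqrt (γ * Real.tanh (t / (3 * γ) + μ)))
    (hf2 : ∀ t, f₂ t = γ / f₁ t) :
    (∀ t : ℝ, 0 ≤ t →
      HasDerivAt f₁ ((1/6) * ((f₁ t)⁻¹ - (γ^2)⁻¹ * (f₁ t)^3)) t) ∧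
    f₁ 0 = f10 ∧
    (∀ t : ℝ, 0 ≤ t →
      f₂ t = Real.sqrt (γ * (Real.cosh (t / (3 * γ) + μ) / Real.sinh (t / (3 * γ) + μ)))) := by
  have hγ' : γ ≠ 0 := ne_of_gt hγ
  have hsub : 0 < f20 - f10 := by linarith
  have hR : 1 < (f10 + f20) / (f20 - f10) := by
    rw [lt_div_iff₀ hsub]; linarith
  have hμpos : 0 < μ := by
    rw [hμ]
    have := Real.log_pos hR
    linarith
  have hupos : ∀ t : ℝ, 0 ≤ t → 0 < t / (3 * γ) + μ := by
    intro t ht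
    have : 0 ≤ t / (3 * γ) := by positivity
    linarith
  have htanh_pos : ∀ t : ℝ, 0 ≤ t → 0 < Real.tanh (t / (3 * γ) + μ) := by
    intro t ht
    rw [Real.tanh_eq_sinh_div_cosh]
    exact div_pos (Real.sinh_pos_iff.mpr (hupos t ht)) (Real.cosh_pos _)
  refine ⟨?_, ?_, ?_⟩
  · -- derivative
    intro t ht
    set u : ℝ := t / (3 * γ) + μ with hu_def
    have hC : (0:ℝ) < Real.cosh u := Real.cosh_pos u
    have hC' : Real.cosh u ≠ 0 := ne_of_gt hC
    have hS : 0 < Real.sinh u := Real.sinh_pos_iff.mpr (hupos t ht)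
    have hu : HasDerivAt (fun x : ℝ => x / (3 * γ) + μ) (1 / (3 * γ)) t := by
      simpa using ((hasDerivAt_id t).div_const (3 * γ)).add_const μ
    have hsinh : HasDerivAt (fun x : ℝ => Real.sinh (x / (3 * γ) + μ))
        (Real.cosh u * (1 / (3 * γ))) t := hu.sinh
    have hcosh : HasDerivAt (fun x : ℝ => Real.cosh (x / (3 * γ) + μ))
        (Real.sinh u * (1 / (3 * γ))) t := hu.cosh
    have hdiv : HasDerivAt
        (fun x : ℝ => γ * (Real.sinh (x / (3 * γ) + μ) / Real.cosh (x / (3 * γ) + μ)))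
        (γ * ((Real.cosh u * (1 / (3 * γ)) * Real.cosh u -
          Real.sinh u * (Real.sinh u * (1 / (3 * γ)))) / Real.cosh u ^ 2)) t :=
      (hsinh.div hcosh hC').const_mul γ
    have hgpos : 0 < γ * (Real.sinh u / Real.cosh u) := by
      have := htanh_pos t ht
      rw [Real.tanh_eq_sinh_div_cosh] at this
      exact mul_pos hγ this
    have hsqrt : HasDerivAt
        (fun x : ℝ => Real.sqrt (γ * (Real.sinh (x / (3 * γ) + μ) / Real.cosh (x / (3 * γ) + μ))))
        ((γ * ((Real.cosh u * (1 / (3 * γ)) * Real.cosh u -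
          Real.sinh u * (Real.sinh u * (1 / (3 * γ)))) / Real.cosh u ^ 2)) /
          (2 * Real.sqrt (γ * (Real.sinh u / Real.cosh u)))) t :=
      hdiv.sqrt (ne_of_gt hgpos)
    have hfun : f₁ = fun x : ℝ =>
        Real.sqrt (γ * (Real.sinh (x / (3 * γ) + μ) / Real.cosh (x / (3 * γ) + μ))) := by
      funext x
      rw [hf1 x, Real.tanh_eq_sinh_div_cosh]
    rw [hfun]
    convert hsqrt using 1
    set s : ℝ := Real.sqrt (γ * (Real.sinh u / Real.cosh u)) with hs_def
    have hspos : 0 < s := Real.sqrt_pos.mpr hgpos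
    have hs2 : s ^ 2 = γ * (Real.sinh u / Real.cosh u) := Real.sq_sqrt (le_of_lt hgpos)
    have hf1t : (fun x : ℝ =>
        Real.sqrt (γ * (Real.sinh (x / (3 * γ) + μ) / Real.cosh (x / (3 * γ) + μ)))) t = s := rfl
    have hpy : Real.cosh u ^ 2 - Real.sinh u ^ 2 = 1 := Real.cosh_sq_sub_sinh_sq u
    rw [hf1t]
    have hs2' : s ^ 2 * Real.cosh u = γ * Real.sinh u := by
      field_simp at hs2
      linarith [hs2]
    have hs4 : s ^ 4 * Real.cosh u ^ 2 = γ ^ 2 * Real.sinh u ^ 2 := by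
      linear_combination (s ^ 2 * Real.cosh u + γ * Real.sinh u) * hs2'
    field_simp
    linear_combination (-6) * hs4
  · -- initial value
    have hRpos : 0 < (f10 + f20) / (f20 - f10) := by positivity
    have hE2 : Real.exp μ ^ 2 = (f10 + f20) / (f20 - f10) := by
      rw [sq, ← Real.exp_add, hμ, show (1/2) * Real.log ((f10 + f20) / (f20 - f10)) +
        (1/2) * Real.log ((f10 + f20) / (f20 - f10)) =
        Real.log ((f10 + f20) / (f20 - f10)) from by ring]
      exact Real.exp_log hRpos
    have hEpos : 0 < Real.exp μ := Real.exp_pos μ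
    have htanhμ : Real.tanh μ = f10 / f20 := by
      rw [Real.tanh_eq_sinh_div_cosh, Real.sinh_eq, Real.cosh_eq, Real.exp_neg]
      have h := hE2
      field_simp at h ⊢
      nlinarith [h, hEpos, hf20, hsub]
    rw [hf1 0, show (0:ℝ) / (3 * γ) + μ = μ from by ring, htanhμ,
      show γ * (f10 / f20) = f10 ^ 2 from by
        rw [← hprod]; field_simp]
    exact Real.sqrt_sq hf10.le
  · -- f₂ formula
    intro t ht
    have hS : 0 < Real.sinh (t / (3 * γ) + μ) := Real.sinh_pos_iff.mpr (hupos t ht)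
    have hC : (0:ℝ) < Real.cosh (t / (3 * γ) + μ) := Real.cosh_pos _
    rw [hf2 t, hf1 t, Real.tanh_eq_sinh_div_cosh]
    have key : γ * (Real.cosh (t / (3 * γ) + μ) / Real.sinh (t / (3 * γ) + μ)) =
        γ ^ 2 / (γ * (Real.sinh (t / (3 * γ) + μ) / Real.cosh (t / (3 * γ) + μ))) := by
      field_simp
    rw [key, Real.sqrt_div (by positivity), Real.sqrt_sq hγ.le]
end
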